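/- Let g = Matrix.diagonal ![1, −1, −1, −1] ∈ Matrix (Fin 4) (Fin 4) ℝ, let A ∈ Matrix (Fin 4) (Fin 4) ℝ be antisymmetric (Aᵀ = −A), and let P ∈ Matrix (Fin 4) (Fin 4) ℝ satisfy Pᵀ * g * P = g and det P = 1. Set A' = P * A * Pᵀ, and define e_i = A i 0, e'_i = A' i 0 for i = 1, 2, 3 and b₁ = A 3 2, b₂ = A 1 3, b₃ = A 2 1, b'₁ = A' 3 2, b'₂ = A' 1 3, b'₃ = A' 2 1. Then e'₁b'₁ + e'₂b'₂ + e'₃b'₃ = e₁b₁ + e₂b₂ + e₃b₃. -/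
import Mathlib

set_option maxHeartbeats 2000000

open Matrix

lemma my_det_fin_four (M : Matrix (Fin 4) (Fin 4) ℝ) :
    M.det =
      M 0 0 * (M 1 1 * (M 2 2 * M 3 3 - M 2 3 * M 3 2) - M 1 2 * (M 2 1 * M 3 3 - M 2 3 * M 3 1)
        + M 1 3 * (M 2 1 * M 3 2 - M 2 2 * M 3 1))
      - M 0 1 * (M 1 0 * (M 2 2 * M 3 3 - M 2 3 * M 3 2) - M 1 2 * (M 2 0 * M 3 3 - M 2 3 * M 3 0)
        + M 1 3 * (M 2 0 * M 3 2 - M 2 2 * M 3 0))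
      + M 0 2 * (M 1 0 * (M 2 1 * M 3 3 - M 2 3 * M 3 1) - M 1 1 * (M 2 0 * M 3 3 - M 2 3 * M 3 0)
        + M 1 3 * (M 2 0 * M 3 1 - M 2 1 * M 3 0))
      - M 0 3 * (M 1 0 * (M 2 1 * M 3 2 - M 2 2 * M 3 1) - M 1 1 * (M 2 0 * M 3 2 - M 2 2 * M 3 0)
        + M 1 2 * (M 2 0 * M 3 1 - M 2 1 * M 3 0)) := by
  rw [Matrix.det_succ_row_zero, Fin.sum_univ_four]
  simp (config := { decide := true }) [Matrix.det_fin_three, Fin.sum_univ_succ,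
    Matrix.submatrix_apply, Fin.succAbove, Fin.lt_def, Fin.succ, Fin.castSucc, Fin.castAdd,
    Fin.castLE]
  ring

theorem dot_eb_pseudoscalar_invariant
    (A P : Matrix (Fin 4) (Fin 4) ℝ) (hA : Aᵀ = -A)
    (hP : Pᵀ * Matrix.diagonal ![1, -1, -1, -1] * P = Matrix.diagonal ![1, -1, -1, -1])
    (hPdet : P.det = 1)
    (A' : Matrix (Fin 4) (Fin 4) ℝ) (hA' : A' = P * A * Pᵀ)
    (e₁ e₂ e₃ b₁ b₂ b₃ e₁' e₂' e₃' b₁' b₂' b₃' : ℝ)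
    (he₁ : e₁ = A 1 0) (he₂ : e₂ = A 2 0) (he₃ : e₃ = A 3 0)
    (hb₁ : b₁ = A 3 2) (hb₂ : b₂ = A 1 3) (hb₃ : b₃ = A 2 1)
    (he₁' : e₁' = A' 1 0) (he₂' : e₂' = A' 2 0) (he₃' : e₃' = A' 3 0)
    (hb₁' : b₁' = A' 3 2) (hb₂' : b₂' = A' 1 3) (hb₃' : b₃' = A' 2 1) :
    e₁' * b₁' + e₂' * b₂' + e₃' * b₃' = e₁ * b₁ + e₂ * b₂ + e₃ * b₃ := by
  have ha : ∀ i j, A j i = -A i j := fun i j => by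
    have := congrFun (congrFun hA i) j
    simpa [Matrix.transpose_apply] using this
  subst hA' he₁ he₂ he₃ hb₁ hb₂ hb₃ he₁' he₂' he₃' hb₁' hb₂' hb₃'
  rw [my_det_fin_four] at hPdet
  simp only [Matrix.mul_apply, Fin.sum_univ_four, Matrix.transpose_apply]
  rw [ha 0 1, ha 0 2, ha 0 3, ha 1 2, ha 1 3, ha 2 3,
    show A 0 0 = 0 by linarith [ha 0 0],
    show A 1 1 = 0 by linarith [ha 1 1],
    show A 2 2 = 0 by linarith [ha 2 2],
    show A 3 3 = 0 by linarith [ha 3 3]]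
  linear_combination (A 0 1 * A 2 3 - A 0 2 * A 1 3 + A 0 3 * A 1 2) * hPdet
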